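/- Let h ∈ ℝ and r > 0, and suppose that no critical point c of U satisfies U(c) ∈ [h, h + r). Let V be a connected component of {x : U(x) < h} and let V' be the connected component of {x : U(x) < h + r} containing V. Then M₀ ∩ V = M₀ ∩ V', i.e. V and V' contain exactly the same local minima of U. -/

import Mathlib

open Set Filter Metric
open scoped RealInnerProductSpace

noncomputable section

/-- Euclidean space `ℝ^d`. -/
abbrev Eucl (d : ℕ) : Type := EuclideanSpace ℝ (Fin d)

/-- The communication height `Θ(x, y)` between two points. -/
def commHeight {d : ℕ} (U : Eucl d → ℝ) (x y : Eucl d) : ℝ :=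
  ⨅ γ : Path x y, ⨆ t : unitInterval, U (γ t)

/-- The communication height `Θ(A, B)` between two sets, `+∞` if one is empty. -/
def commHeightSet {d : ℕ} (U : Eucl d → ℝ) (A B : Set (Eucl d)) : EReal :=
  ⨅ x ∈ A, ⨅ y ∈ B, (commHeight U x y : EReal)

/-- `M̃`: the local minima of `U` outside `M` of height at most `c = U(M)`. -/
def tildeSet {d : ℕ} (U : Eucl d → ℝ) (M : Set (Eucl d)) (c : ℝ) : Set (Eucl d) :=
  {m' | IsLocalMin U m' ∧ m' ∉ M ∧ U m' ≤ c}

/-- `Ξ(M) = Θ(M, M̃) − U(M) ∈ (0, ∞]`. -/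
def XiSet {d : ℕ} (U : Eucl d → ℝ) (M : Set (Eucl d)) (c : ℝ) : EReal :=
  commHeightSet U M (tildeSet U M c) - (c : EReal)

/-- `M` (simple, common value `c`) is bound. -/
def IsBound {d : ℕ} (U : Eucl d → ℝ) (M : Set (Eucl d)) (c : ℝ) : Prop :=
  (∃ m, M = {m}) ∨
    ∀ m ∈ M, ∀ m' ∈ M, (commHeight U m m' : EReal) < commHeightSet U M (tildeSet U M c)

/-- `A` is a connected component of `S`. -/
def IsCompOf {d : ℕ} (S A : Set (Eucl d)) : Prop :=
  ∃ x ∈ S, A = connectedComponentIn S x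

/-- The Hessian matrix of `U` at `x`. -/
def hessMat {d : ℕ} (U : Eucl d → ℝ) (x : Eucl d) : Matrix (Fin d) (Fin d) ℝ :=
  Matrix.of fun i j =>
    iteratedFDeriv ℝ 2 U x ![EuclideanSpace.single i (1 : ℝ), EuclideanSpace.single j (1 : ℝ)]

/-- `σ` is a saddle point of `U`. -/
def IsSaddle {d : ℕ} (U : Eucl d → ℝ) (σ : Eucl d) : Prop :=
  gradient U σ = 0 ∧
    ∃ hH : (hessMat U σ).IsHermitian,
      IsUnit (hessMat U σ).det ∧ ∃! i, hH.eigenvalues i < 0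

/-- `x ↷ y` : heteroclinic orbit of `ẋ = b(x)` from `x` to `y`. -/
def Hetero {d : ℕ} (b : Eucl d → Eucl d) (x y : Eucl d) : Prop :=
  ∃ φ : ℝ → Eucl d,
    (∀ t, HasDerivAt φ (b (φ t)) t) ∧
      Tendsto φ atBot (nhds x) ∧ Tendsto φ atTop (nhds y)

/-- `σ ↝ m`. -/
def ConnectsTo {d : ℕ} (U : Eucl d → ℝ) (b : Eucl d → Eucl d) (σ m : Eucl d) : Prop :=
  Hetero b σ m ∨
    ∃ (k : ℕ) (_ : 0 < k) (σs : Fin k → Eucl d) (ms : Fin (k + 1) → Eucl d),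
      (∀ i, IsSaddle U (σs i)) ∧ (∀ i, U (σs i) < U σ) ∧
        (∀ i : Fin k, IsLocalMin U (ms i.castSucc)) ∧
        ms (Fin.last k) = m ∧ Hetero b σ (ms 0) ∧
        ∀ i : Fin k, Hetero b (σs i) (ms i.castSucc) ∧ Hetero b (σs i) (ms i.succ)

/-- `σ ↝ M`. -/
def ConnectsToSet {d : ℕ} (U : Eucl d → ℝ) (b : Eucl d → Eucl d) (σ : Eucl d)
    (M : Set (Eucl d)) : Prop :=
  ∃ m ∈ M, ConnectsTo U b σ m

/-- `σ ↷ M`. -/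
def HeteroToSet {d : ℕ} (b : Eucl d → Eucl d) (σ : Eucl d) (M : Set (Eucl d)) : Prop :=
  ∃ m ∈ M, Hetero b σ m

/-- `M →_σ M'`. -/
def AdjacentVia {d : ℕ} (U : Eucl d → ℝ) (b : Eucl d → Eucl d) (M M' : Set (Eucl d))
    (c : ℝ) (σ : Eucl d) : Prop :=
  IsSaddle U σ ∧ ConnectsToSet U b σ M ∧ HeteroToSet b σ M' ∧
    (U σ : EReal) = commHeightSet U M (tildeSet U M c) ∧
    (U σ : EReal) = commHeightSet U M M'

/-- Unstable-manifold property. -/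
def UnstableManifoldProperty {d : ℕ} (U : Eucl d → ℝ) (b : Eucl d → Eucl d) : Prop :=
  ∀ σ : Eucl d, IsSaddle U σ →
    ∃ r' > (0 : ℝ), ∃ Ap Am : Set (Eucl d),
      Ap ≠ Am ∧
      IsCompOf (ball σ r' ∩ {x | U x < U σ}) Ap ∧
      IsCompOf (ball σ r' ∩ {x | U x < U σ}) Am ∧
      (∀ C, IsCompOf (ball σ r' ∩ {x | U x < U σ}) C → C = Ap ∨ C = Am) ∧
      ∃ mp mm : Eucl d, IsLocalMin U mp ∧ IsLocalMin U mm ∧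
        ∃ tp tm : ℝ, ∃ φp φm : ℝ → Eucl d,
          (∀ t, HasDerivAt φp (b (φp t)) t) ∧ (∀ t, HasDerivAt φm (b (φm t)) t) ∧
          Tendsto φp atBot (nhds σ) ∧ Tendsto φp atTop (nhds mp) ∧
          Tendsto φm atBot (nhds σ) ∧ Tendsto φm atTop (nhds mm) ∧
          φp '' Iic tp ⊆ Ap ∧ φm '' Iic tm ⊆ Am


/-- MVT-type bound: if `g' ≤ c` on `[0,s]` then `g t ≤ g 0 + c * t` there. -/
private lemma aux_deriv_bound {g g' : ℝ → ℝ} {s c : ℝ} (hs : 0 ≤ s)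
    (hg : ∀ t, HasDerivAt g (g' t) t) (hc : ∀ t ∈ Set.Icc (0:ℝ) s, g' t ≤ c) :
    ∀ t ∈ Set.Icc (0:ℝ) s, g t ≤ g 0 + c * t := by
  intro t ht
  have hφ : ∀ u, HasDerivAt (fun t => g t - c * t) (g' u - c) u := fun u =>
    (hg u).sub (by simpa using (hasDerivAt_id u).const_mul c)
  have hanti : AntitoneOn (fun t => g t - c * t) (Icc 0 s) :=
    antitoneOn_of_deriv_nonpos (convex_Icc 0 s)
      (fun u _ => (hφ u).continuousAt.continuousWithinAt)
      (fun u _ => (hφ u).differentiableAt.differentiableWithinAt)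
      (fun u hu => by
        rw [(hφ u).deriv]
        have := hc u (interior_subset hu)
        linarith)
  have h2 := hanti (left_mem_Icc.mpr hs) ht ht.1
  simp only [mul_zero, sub_zero] at h2
  linarith

set_option maxHeartbeats 2000000 in
private lemma aux_descend {d : ℕ} (U : Eucl d → ℝ) (hU : ContDiff ℝ (⊤ : ℕ∞) U)
    (hcoer : Tendsto U (cocompact (Eucl d)) atTop)
    (hcritfin : {x : Eucl d | gradient U x = 0}.Finite)
    (h r : ℝ) (hr : 0 < r)
    (hnocrit : ∀ x : Eucl d, gradient U x = 0 → U x ∉ Ico h (h + r))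
    (x₀ y : Eucl d) (hx₀ : U x₀ < h) (hy : U y < h)
    (γ : Path x₀ y) (hγ : ∀ t, U (γ t) < h + r) :
    JoinedIn {x | U x < h} x₀ y := by
  classical
  have hdiff : Differentiable ℝ U := hU.differentiable (by simp)
  have hGradCont : Continuous (fun x : Eucl d => gradient U x) := by
    show Continuous fun x : Eucl d =>
      (InnerProductSpace.toDual ℝ (Eucl d)).symm (fderiv ℝ U x)
    exact ((InnerProductSpace.toDual ℝ (Eucl d)).symm.continuous).comp
      (hU.continuous_fderiv (by simp))
  -- the maximum of U along the path
  obtain ⟨z, hzr, hzmax⟩ := (isCompact_range γ.continuous).exists_isMaxOn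
    ⟨γ 0, mem_range_self 0⟩ hU.continuous.continuousOn
  set M : ℝ := U z with hM
  have hMmax : ∀ t, U (γ t) ≤ M := fun t => hzmax (mem_range_self t)
  have hMlt : M < h + r := by obtain ⟨t0, ht0⟩ := hzr; rw [hM, ← ht0]; exact hγ t0
  by_cases hMh : M < h
  · exact ⟨γ, fun t => lt_of_le_of_lt (hMmax t) hMh⟩
  push_neg at hMh
  -- compact sublevel sets
  have hev : ∀ᶠ x in cocompact (Eucl d), M < U x := hcoer.eventually_gt_atTop M
  obtain ⟨K, hKc, hKs⟩ := (hasBasis_cocompact.eventually_iff).mp hev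
  have hK₂ : IsCompact {x : Eucl d | U x ≤ M} :=
    hKc.of_isClosed_subset (isClosed_le hU.continuous continuous_const)
      (fun x hx => by
        by_contra hxK
        exact absurd (hKs hxK) (not_lt.mpr hx))
  set K₂ : Set (Eucl d) := {x : Eucl d | U x ≤ M} with hK₂def
  set K₃ : Set (Eucl d) := Metric.cthickening 1 K₂ with hK₃def
  have hK₃ : IsCompact K₃ := hK₂.cthickening
  have hK₂K₃ : K₂ ⊆ K₃ := self_subset_cthickening K₂
  have hK₂ne : K₂.Nonempty := ⟨γ 0, by simp only [hK₂def, mem_setOf_eq]; exact hMmax 0⟩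
  -- bound on the gradient
  obtain ⟨xB, _, hxB⟩ := hK₃.exists_isMaxOn (hK₂ne.mono hK₂K₃)
    (hGradCont.norm.continuousOn)
  set B : ℝ := ‖gradient U xB‖ + 1 with hB
  have hBpos : 0 < B := by positivity
  have hBle : ∀ x ∈ K₃, ‖gradient U x‖ ≤ B := fun x hx => by
    have h1 := hxB hx
    simp only [Set.mem_setOf_eq] at h1
    linarith
  -- margin below h avoiding critical values
  obtain ⟨α, hα0, hαprop⟩ :
      ∃ α > (0:ℝ), ∀ c : Eucl d, gradient U c = 0 → U c < h → U c < h - α := by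
    by_cases hne : ∃ v ∈ U '' {x : Eucl d | gradient U x = 0}, v < h
    · have hTfin : (U '' {x : Eucl d | gradient U x = 0}).Finite := hcritfin.image U
      set Tf : Finset ℝ := hTfin.toFinset.filter (· < h) with hTf
      have hTne : Tf.Nonempty := by
        obtain ⟨v, hv, hvh⟩ := hne
        exact ⟨v, by simp [hTf, hTfin.mem_toFinset, hv, hvh]⟩
      have hmaxlt : Tf.max' hTne < h := by
        have := Tf.max'_mem hTne
        simp only [hTf, Finset.mem_filter] at this
        exact this.2
      refine ⟨(h - Tf.max' hTne) / 2, by linarith, fun c hc hch => ?_⟩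
      have hmem : U c ∈ Tf := by
        simp only [hTf, Finset.mem_filter, hTfin.mem_toFinset]
        exact ⟨⟨c, hc, rfl⟩, hch⟩
      have := Tf.le_max' _ hmem
      linarith
    · exact ⟨1, one_pos, fun c hc hch => absurd ⟨U c, ⟨c, hc, rfl⟩, hch⟩ hne⟩
  -- lower bound on the gradient in the critical strip
  set S : Set (Eucl d) := {x : Eucl d | h - α ≤ U x ∧ U x ≤ M} with hSdef
  have hScpt : IsCompact S :=
    hK₂.of_isClosed_subset
      ((isClosed_le continuous_const hU.continuous).inter
        (isClosed_le hU.continuous continuous_const))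
      (fun x hx => hx.2)
  have hSne : S.Nonempty := ⟨z, by
    constructor
    · have h1 : M = U z := hM
      linarith
    · exact hM.ge⟩
  obtain ⟨xε, hxεS, hxε⟩ := hScpt.exists_isMinOn hSne hGradCont.norm.continuousOn
  set ε0 : ℝ := ‖gradient U xε‖ with hε0def
  have hε0 : 0 < ε0 := by
    rcases eq_or_lt_of_le (norm_nonneg (gradient U xε)) with h0 | h0
    · exfalso
      have hcrit : gradient U xε = 0 := by
        rw [← norm_eq_zero]; exact h0.symm
      have h1 : U xε < h + r := lt_of_le_of_lt hxεS.2 hMlt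
      have h2 : U xε < h := by
        by_contra hge
        exact hnocrit xε hcrit ⟨not_lt.mp hge, h1⟩
      have := hαprop xε hcrit h2
      exact absurd hxεS.1 (not_le.mpr this)
    · exact h0
  have hεle : ∀ x ∈ S, ε0 ≤ ‖gradient U x‖ := fun x hx => hxε hx
  set μ : ℝ := ε0 / 2 with hμdef
  have hμ0 : 0 < μ := by positivity
  -- uniform continuity of the gradient on K₃
  obtain ⟨δ0, hδ0pos, hδ0⟩ := (Metric.uniformContinuousOn_iff.mp
    (hK₃.uniformContinuousOn_of_continuous hGradCont.continuousOn)) μ hμ0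
  -- the step size
  set s : ℝ := min (min δ0 1 / (2 * B)) (α / μ ^ 2) with hsdef
  have hs : 0 < s := by
    apply lt_min
    · positivity
    · positivity
  have hsB : s * B ≤ min δ0 1 / 2 := by
    have h1 : s ≤ min δ0 1 / (2 * B) := min_le_left _ _
    calc s * B ≤ (min δ0 1 / (2 * B)) * B := by nlinarith
    _ = min δ0 1 / 2 := by field_simp
  have hsμ : s * μ ^ 2 ≤ α := by
    have h1 : s ≤ α / μ ^ 2 := min_le_right _ _
    have hμ2 : 0 < μ ^ 2 := by positivity
    calc s * μ ^ 2 ≤ (α / μ ^ 2) * μ ^ 2 := by nlinarith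
    _ = α := by field_simp
  -- the core descent estimate
  have core : ∀ x : Eucl d, U x ≤ M → ∀ t ∈ Set.Icc (0:ℝ) s,
      U (x - t • gradient U x) ≤
        U x - t * (‖gradient U x‖ ^ 2 - μ * ‖gradient U x‖) := by
    intro x hxM
    set v : Eucl d := gradient U x with hv
    have hxK₂ : x ∈ K₂ := hxM
    have hxK₃ : x ∈ K₃ := hK₂K₃ hxK₂
    have hvB : ‖v‖ ≤ B := hBle x hxK₃
    have hφd : ∀ t : ℝ, HasDerivAt (fun t : ℝ => x - t • v) (-v) t := fun t => by
      simpa using ((hasDerivAt_id t).smul_const v).const_sub x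
    have hg : ∀ t : ℝ, HasDerivAt (fun t : ℝ => U (x - t • v))
        (inner ℝ (gradient U (x - t • v)) (-v) : ℝ) t := fun t => by
      have h1 : HasDerivAt (fun t : ℝ => U (x - t • v)) ((fderiv ℝ U (x - t • v)) (-v)) t :=
        ((hdiff (x - t • v)).hasFDerivAt).comp_hasDerivAt t (hφd t)
      convert h1 using 1
      exact InnerProductSpace.toDual_symm_apply
    have hbound : ∀ t ∈ Set.Icc (0:ℝ) s,
        (inner ℝ (gradient U (x - t • v)) (-v) : ℝ) ≤ -(‖v‖ ^ 2 - μ * ‖v‖) := by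
      intro t ht
      set p : Eucl d := x - t • v with hp
      have hdist : dist p x ≤ s * B := by
        rw [hp, dist_eq_norm]
        have : x - t • v - x = -(t • v) := by abel
        rw [this, norm_neg, norm_smul, Real.norm_eq_abs, abs_of_nonneg ht.1]
        nlinarith [norm_nonneg v, ht.2]
      have hd1 : dist p x ≤ 1 := le_trans hdist (le_trans hsB (by
        have := min_le_right δ0 1; linarith))
      have hdδ : dist p x < δ0 := lt_of_le_of_lt (le_trans hdist hsB) (by
        have := min_le_left δ0 1; linarith)
      have hpK₃ : p ∈ K₃ := mem_cthickening_of_dist_le p x 1 K₂ hxK₂ hd1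
      have hμd : ‖gradient U p - v‖ < μ := by
        have := hδ0 p hpK₃ x hxK₃ hdδ
        rwa [dist_eq_norm] at this
      have hinner : (inner ℝ (gradient U p - v) v : ℝ) =
          (inner ℝ (gradient U p) v : ℝ) - inner ℝ v v := inner_sub_left _ _ _
      have habs : |(inner ℝ (gradient U p - v) v : ℝ)| ≤ ‖gradient U p - v‖ * ‖v‖ :=
        abs_real_inner_le_norm _ _
      have h2 := abs_le.mp habs
      have hvv : (inner ℝ v v : ℝ) = ‖v‖ ^ 2 := real_inner_self_eq_norm_sq v
      have hnegv : (inner ℝ (gradient U p) (-v) : ℝ) = -(inner ℝ (gradient U p) v : ℝ) :=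
        inner_neg_right _ _
      rw [hnegv]
      nlinarith [norm_nonneg v, norm_nonneg (gradient U p - v)]
    intro t ht
    have := aux_deriv_bound hs.le hg hbound t ht
    simpa [mul_comm] using by linarith [this, (by simp : U (x - (0:ℝ) • v) = U x)]
  -- invariance / descent facts
  have fact2 : ∀ x : Eucl d, U x ≤ M → U x < h → ∀ t ∈ Set.Icc (0:ℝ) s,
      U (x - t • gradient U x) < h := by
    intro x hxM hxh t ht
    have hc := core x hxM t ht
    set a : ℝ := ‖gradient U x‖ with ha
    by_cases hxa : h - α ≤ U x
    · have hxS : x ∈ S := ⟨hxa, hxM⟩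
      have hεa : ε0 ≤ a := hεle x hxS
      have hpos : 0 ≤ a ^ 2 - μ * a := by nlinarith
      nlinarith [ht.1]
    · push_neg at hxa
      have hq : -(a ^ 2 - μ * a) ≤ μ ^ 2 / 4 := by nlinarith [sq_nonneg (a - μ / 2)]
      have htμ : t * (μ ^ 2 / 4) ≤ s * μ ^ 2 / 4 := by nlinarith [ht.1, ht.2, sq_nonneg μ]
      nlinarith [ht.1]
  set β : ℝ := s * (ε0 ^ 2 / 2) with hβdef
  have hβ : 0 < β := by positivity
  have fact1 : ∀ x : Eucl d, U x ≤ M → h ≤ U x →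
      U (x - s • gradient U x) ≤ U x - β := by
    intro x hxM hxh
    have hxS : x ∈ S := ⟨by linarith, hxM⟩
    have hεa : ε0 ≤ ‖gradient U x‖ := hεle x hxS
    have hc := core x hxM s ⟨hs.le, le_refl s⟩
    have hkey : ε0 ^ 2 / 2 ≤ ‖gradient U x‖ ^ 2 - μ * ‖gradient U x‖ := by nlinarith
    nlinarith
  -- the descent map
  set F : Eucl d → Eucl d := fun x => x - s • gradient U x with hF
  have hFcont : Continuous F := continuous_id.sub (hGradCont.const_smul s)
  have hfact2' : ∀ x : Eucl d, U x ≤ M → U x < h → U (F x) < h := by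
    intro x hxM hxh
    exact fact2 x hxM hxh s ⟨hs.le, le_refl s⟩
  -- iterating the descent
  have iter_lemma : ∀ n : ℕ, ∀ x : Eucl d, U x ≤ M →
      U (F^[n] x) < h ∨ U (F^[n] x) ≤ U x - n * β := by
    intro n
    induction n with
    | zero => intro x hx; right; simp
    | succ n ih =>
      intro x hx
      rw [Function.iterate_succ_apply']
      have hzM : U (F^[n] x) ≤ M := by
        rcases ih x hx with hz | hz
        · linarith
        · have : (0:ℝ) ≤ (n:ℝ) * β := by positivity
          linarith
      by_cases hzh : U (F^[n] x) < h
      · left; exact hfact2' _ hzM hzh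
      · push_neg at hzh
        rcases ih x hx with hz | hz
        · exact absurd hz (not_lt.mpr hzh)
        · right
          have := fact1 (F^[n] x) hzM hzh
          push_cast
          have hFeq : U (F (F^[n] x)) ≤ U (F^[n] x) - β := this
          linarith
  set N : ℕ := ⌈(M - h) / β⌉₊ + 1 with hN
  have final_below : ∀ x : Eucl d, U x ≤ M → U (F^[N] x) < h := by
    intro x hx
    rcases iter_lemma N x hx with h1 | h1
    · exact h1
    · have hceil : (M - h) / β ≤ (⌈(M - h) / β⌉₊ : ℝ) := Nat.le_ceil _
      have : M - h ≤ (⌈(M - h) / β⌉₊ : ℝ) * β := by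
        rw [div_le_iff₀ hβ] at hceil; linarith
      have hNβ : M - h < (N : ℝ) * β := by
        rw [hN]; push_cast; nlinarith
      linarith
  -- joining along single descent steps
  have step_join : ∀ x : Eucl d, U x < h → JoinedIn {x : Eucl d | U x < h} x (F x) := by
    intro x hxh
    have hxM : U x ≤ M := le_trans hxh.le hMh
    refine ⟨⟨⟨fun t => x - ((t : ℝ) * s) • gradient U x, by
      apply Continuous.sub continuous_const
      exact ((continuous_subtype_val.mul continuous_const).smul continuous_const)⟩,
      by simp, by simp [hF]⟩, fun t => ?_⟩
    have ht1 : (0:ℝ) ≤ (t : ℝ) * s := mul_nonneg t.2.1 hs.le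
    have ht2 : (t : ℝ) * s ≤ s := by nlinarith [t.2.2, hs.le, t.2.1]
    exact fact2 x hxM hxh ((t : ℝ) * s) ⟨ht1, ht2⟩
  have inv_orbit : ∀ x : Eucl d, U x < h → ∀ n : ℕ, U (F^[n] x) < h := by
    intro x hxh n
    induction n with
    | zero => simpa using hxh
    | succ n ih =>
      rw [Function.iterate_succ_apply']
      exact hfact2' _ (le_trans ih.le hMh) ih
  have orbit_join : ∀ x : Eucl d, U x < h → ∀ n : ℕ,
      JoinedIn {x : Eucl d | U x < h} x (F^[n] x) := by
    intro x hxh n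
    induction n with
    | zero => exact JoinedIn.refl hxh
    | succ n ih =>
      rw [Function.iterate_succ_apply']
      exact ih.trans (step_join (F^[n] x) (inv_orbit x hxh n))
  -- putting things together
  have hjoin1 : JoinedIn {x : Eucl d | U x < h} x₀ (F^[N] x₀) := orbit_join x₀ hx₀ N
  have hjoin2 : JoinedIn {x : Eucl d | U x < h} y (F^[N] y) := orbit_join y hy N
  have hΓ : JoinedIn {x : Eucl d | U x < h} (F^[N] x₀) (F^[N] y) := by
    refine ⟨γ.map (hFcont.iterate N), fun t => ?_⟩
    simp only [Path.map_coe, Function.comp_apply]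
    exact final_below (γ t) (hMmax t)
  exact (hjoin1.trans hΓ).trans hjoin2.symm

theorem statement10 {d : ℕ} (hd : 1 ≤ d)
    (U : Eucl d → ℝ) (hU : ContDiff ℝ (⊤ : ℕ∞) U)
    (hcoer : Tendsto U (cocompact (Eucl d)) atTop)
    (hcritfin : {x : Eucl d | gradient U x = 0}.Finite)
    (hmorse : ∀ x : Eucl d, gradient U x = 0 → IsUnit (hessMat U x).det)
    (h r : ℝ) (hr : 0 < r)
    (hnocrit : ∀ x : Eucl d, gradient U x = 0 → U x ∉ Ico h (h + r))
    (x₀ : Eucl d) (hx₀ : U x₀ < h)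
    (V V' : Set (Eucl d))
    (hV : V = connectedComponentIn {x | U x < h} x₀)
    (hV' : V' = connectedComponentIn {x | U x < h + r} x₀) :
    {m | IsLocalMin U m} ∩ V = {m | IsLocalMin U m} ∩ V' := by
  have hsub : {x : Eucl d | U x < h} ⊆ {x : Eucl d | U x < h + r} :=
    fun x hx => lt_of_lt_of_le hx (le_add_of_nonneg_right hr.le)
  have hVV' : V ⊆ V' := by
    rw [hV, hV']
    exact connectedComponentIn_mono x₀ hsub
  ext m
  simp only [mem_inter_iff, mem_setOf_eq]
  constructor
  · rintro ⟨hm, hmV⟩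
    exact ⟨hm, hVV' hmV⟩
  · rintro ⟨hm, hmV'⟩
    refine ⟨hm, ?_⟩
    have hgrad : gradient U m = 0 := by
      show (InnerProductSpace.toDual ℝ (Eucl d)).symm (fderiv ℝ U m) = 0
      rw [hm.fderiv_eq_zero]
      simp
    have hmlt : U m < h + r := by
      have : m ∈ {x : Eucl d | U x < h + r} := by
        rw [hV'] at hmV'
        exact connectedComponentIn_subset _ _ hmV'
      exact this
    have hmh : U m < h := by
      by_contra hge
      exact hnocrit m hgrad ⟨not_lt.mp hge, hmlt⟩
    have hopen : IsOpen {x : Eucl d | U x < h + r} := isOpen_lt hU.continuous continuous_const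
    have hx₀' : x₀ ∈ {x : Eucl d | U x < h + r} := by
      show U x₀ < h + r; linarith
    have hV'open : IsOpen V' := hV' ▸ hopen.connectedComponentIn
    have hV'conn : IsConnected V' := hV' ▸ isConnected_connectedComponentIn_iff.mpr hx₀'
    have hV'path : IsPathConnected V' := (hV'open.isConnected_iff_isPathConnected).mp hV'conn
    have hx₀V' : x₀ ∈ V' := hV' ▸ mem_connectedComponentIn hx₀'
    obtain ⟨γ, hγ⟩ := hV'path.joinedIn x₀ hx₀V' m hmV'
    have hγ' : ∀ t, U (γ t) < h + r := fun t => by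
      have : γ t ∈ {x : Eucl d | U x < h + r} := by
        rw [hV'] at hγ
        exact connectedComponentIn_subset _ _ (hγ t)
      exact this
    have hjoined : JoinedIn {x : Eucl d | U x < h} x₀ m :=
      aux_descend U hU hcoer hcritfin h r hr hnocrit x₀ m hx₀ hmh γ hγ'
    obtain ⟨p, hp⟩ := hjoined
    have hrange : range p ⊆ {x : Eucl d | U x < h} := by
      rintro _ ⟨t, rfl⟩; exact hp t
    have hconn : IsPreconnected (range p) := (isConnected_range p.continuous).isPreconnected
    have hx₀r : x₀ ∈ range p := ⟨0, p.source⟩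
    have hmr : m ∈ range p := ⟨1, p.target⟩
    rw [hV]
    exact hconn.subset_connectedComponentIn hx₀r hrange hmr

end
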